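/- Let E be a real vector space and let x₀, x₁ ∈ E be linearly independent. Let α, σ : [0,1] → ℝ satisfy the boundary conditions α(1) = 1 and σ(1) = 0, with σ(t) > 0 for all t ∈ [0,1), and suppose ρ = α/σ is strictly increasing on [0,1). Then for every t ∈ [0,1) and every real number c ≠ 1, the scaled point c·(α(t)·x₁ + σ(t)·x₀) does not lie on the source sampling path: for all t' ∈ [0,1], c·(α(t)·x₁ + σ(t)·x₀) ≠ α(t')·x₁ + σ(t')·x₀. -/

import Mathlib

/-- **Rescaled points leave the source sampling path.** If `x₀, x₁` are linearly
independent and `c ≠ 1`, then `c • (α t • x₁ + σ t • x₀)` for `t ∈ [0,1)` never lies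
on the source path `{α t' • x₁ + σ t' • x₀ : t' ∈ [0,1]}`. -/
theorem rescaled_point_off_path
    {E : Type*} [AddCommGroup E] [Module ℝ E]
    (x₀ x₁ : E) (hindep : LinearIndependent ℝ ![x₀, x₁])
    (α σ : ℝ → ℝ)
    (hα1 : α 1 = 1) (hσ1 : σ 1 = 0)
    (hσpos : ∀ t ∈ Set.Ico (0:ℝ) 1, 0 < σ t)
    (hρ : StrictMonoOn (fun t => α t / σ t) (Set.Ico 0 1)) :
    ∀ t ∈ Set.Ico (0:ℝ) 1, ∀ c : ℝ, c ≠ 1 →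
      ∀ t' ∈ Set.Icc (0:ℝ) 1,
        c • (α t • x₁ + σ t • x₀) ≠ α t' • x₁ + σ t' • x₀ := by
  intro t ht c hc t' ht' heq
  have hkey : ∀ a b : ℝ, a • x₀ + b • x₁ = 0 → a = 0 ∧ b = 0 := by
    intro a b hab
    have := Fintype.linearIndependent_iff.mp hindep ![a, b] ?_
    · exact ⟨this 0, this 1⟩
    · simpa [Fin.sum_univ_two] using hab
  have hco : (c * σ t - σ t') • x₀ + (c * α t - α t') • x₁ = 0 := by
    have : (c * α t) • x₁ + (c * σ t) • x₀ = α t' • x₁ + σ t' • x₀ := by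
      simpa [smul_add, smul_smul] using heq
    rw [sub_smul, sub_smul]
    abel_nf
    linear_combination (norm := module) this
  obtain ⟨h1, h2⟩ := hkey _ _ hco
  have hσt := hσpos t ht
  have hσeq : c * σ t = σ t' := by linarith
  have hαeq : c * α t = α t' := by linarith
  rcases eq_or_lt_of_le ht'.2 with h1' | h1'
  · -- t' = 1
    have : c * σ t = 0 := by rw [hσeq, h1', hσ1]
    have hc0 : c = 0 := by
      rcases mul_eq_zero.mp this with h | h
      · exact h
      · exact absurd h (ne_of_gt hσt)
    have : α t' = 0 := by rw [← hαeq, hc0, zero_mul]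
    rw [h1', hα1] at this
    norm_num at this
  · have ht'' : t' ∈ Set.Ico (0:ℝ) 1 := ⟨ht'.1, h1'⟩
    have hσt' := hσpos t' ht''
    have hcpos : 0 < c := by
      by_contra h
      push_neg at h
      nlinarith
    have hρeq : α t / σ t = α t' / σ t' := by
      rw [← hσeq, ← hαeq]
      field_simp
    have : t = t' := hρ.injOn ht ht'' hρeq
    apply hc
    have : σ t = σ t' := by rw [this]
    nlinarith
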